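/- Let a, b, c, d be integers with 1 = a ≤ b ≤ c ≤ d, and let M be the 4×4 integer matrix with diagonal entries a, b, c, d and all off-diagonal entries equal to −1. If det M = 0, then b ≤ 5. Moreover: if b = 3 and c ≥ 7, then c = d = 7; if b = 4, then c = 4 and d = 9; and if b = 5, then c = d = 5. -/

import Mathlib

theorem stmt_10 (a b c d : ℤ) (ha : a = 1) (hab : a ≤ b) (hbc : b ≤ c) (hcd : c ≤ d)
    (hdet : (!![a, -1, -1, -1;
                -1, b, -1, -1;
                -1, -1, c, -1;
                -1, -1, -1, d]).det = 0) :
    b ≤ 5 ∧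
    (b = 3 → 7 ≤ c → c = 7 ∧ d = 7) ∧
    (b = 4 → c = 4 ∧ d = 9) ∧
    (b = 5 → c = 5 ∧ d = 5) := by
  subst ha
  have heq : b*c*d - b*c - b*d - c*d - 3*b - 3*c - 3*d - 5 = 0 := by
    simp [Matrix.det_succ_row_zero, Fin.sum_univ_succ] at hdet
    simp only [show (Fin.succAbove (2:Fin 4) (2:Fin 3)) = 3 from rfl,
      show (Fin.succAbove (3:Fin 4) (2:Fin 3)) = 2 from rfl,
      show (Fin.castSucc (2:Fin 3)) = (2:Fin 4) from rfl,
      show (Fin.succAbove (1:Fin 4) (2:Fin 3)) = 3 from rfl,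
      show ∀ x:ℤ, ![-1,-1,-1,x] (3:Fin 4) = x from fun _ => rfl,
      show ∀ x:ℤ, ![-1,-1,x,-1] (3:Fin 4) = -1 from fun _ => rfl,
      show ∀ x:ℤ, ![-1,-1,x,-1] (2:Fin 4) = x from fun _ => rfl,
      show ∀ x:ℤ, ![-1,x,-1,-1] (3:Fin 4) = -1 from fun _ => rfl,
      show ∀ x:ℤ, ![-1,-1,-1,x] (2:Fin 4) = -1 from fun _ => rfl] at hdet
    linear_combination hdet
  refine ⟨?_, ?_, ?_, ?_⟩
  · by_contra hb
    push_neg at hb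
    have hc : 6 ≤ c := le_trans hb hbc
    have hd : 6 ≤ d := le_trans hc hcd
    nlinarith [mul_nonneg (mul_nonneg (by linarith : (0:ℤ) ≤ b - 6) (by linarith : (0:ℤ) ≤ c - 6)) (by linarith : (0:ℤ) ≤ d - 6),
      mul_nonneg (by linarith : (0:ℤ) ≤ b - 6) (by linarith : (0:ℤ) ≤ c - 6),
      mul_nonneg (by linarith : (0:ℤ) ≤ b - 6) (by linarith : (0:ℤ) ≤ d - 6),
      mul_nonneg (by linarith : (0:ℤ) ≤ c - 6) (by linarith : (0:ℤ) ≤ d - 6)]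
  · rintro rfl hc7
    have h2 : 2*((c-3)*(d-3)) = 32 := by linear_combination heq
    have h16 : (c-3)*(d-3) = 16 := by linarith
    have hc : c ≤ 7 := by nlinarith [h16, mul_nonneg (sub_nonneg.2 hcd) (show (0:ℤ) ≤ c - 3 by linarith)]
    have hc' : c = 7 := le_antisymm hc hc7
    subst hc'
    exact ⟨rfl, by linarith⟩
  · rintro rfl
    have h3 : 3*((3*c-7)*(3*d-7)) = 300 := by linear_combination 9*heq
    have h100 : (3*c-7)*(3*d-7) = 100 := by linarith
    have hc4 : 4 ≤ c := hbc
    have hd4 : c ≤ d := hcd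
    have hc : c ≤ 5 := by nlinarith [h100, mul_nonneg (sub_nonneg.2 hcd) (show (0:ℤ) ≤ 3*c - 7 by linarith)]
    interval_cases c
    · constructor
      · rfl
      · omega
    · exfalso; omega
  · rintro rfl
    have h4 : 4*((c-2)*(d-2)) = 36 := by linear_combination heq
    have h9 : (c-2)*(d-2) = 9 := by linarith
    have hc : c ≤ 5 := by nlinarith [h9, mul_nonneg (sub_nonneg.2 hcd) (show (0:ℤ) ≤ c - 2 by linarith)]
    have hc' : c = 5 := le_antisymm hc hbc
    subst hc'
    exact ⟨rfl, by linarith⟩
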